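/- If M ⊆ ℝ^d is closed and bounded above componentwise (i.e., there is b ∈ ℝ^d with z ≤ b for all z ∈ M), and M is nonempty, then M satisfies the upper domination property: for every z ∈ M there exists a Pareto maximal point ẑ of M with z ≤ ẑ. -/

import Mathlib

/-- A nonempty closed subset of `ℝ^d` that is bounded above
componentwise satisfies the upper domination property: every point of `M` is
dominated by a Pareto maximal point of `M` (where `zhat` is Pareto maximal iff
`M ∩ (zhat + ℝ^d_+) = {zhat}`). -/
theorem upper_domination_property {d : ℕ} (M : Set (Fin d → ℝ))
    (hM : IsClosed M) (hne : M.Nonempty) (b : Fin d → ℝ) (hb : ∀ z ∈ M, z ≤ b) :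
    ∀ z ∈ M, ∃ zhat ∈ M, z ≤ zhat ∧ M ∩ {w | zhat ≤ w} = {zhat} := by
  intro z hz
  set S : Set (Fin d → ℝ) := M ∩ {w | z ≤ w} with hS
  have hSclosed : IsClosed S := hM.inter (isClosed_le continuous_const continuous_id)
  have hSsub : S ⊆ Set.Icc z b := fun w hw => ⟨hw.2, hb w hw.1⟩
  have hScompact : IsCompact S :=
    (isCompact_Icc).of_isClosed_subset hSclosed hSsub
  have hSne : S.Nonempty := ⟨z, hz, le_refl z⟩
  have hcont : ContinuousOn (fun w : Fin d → ℝ => ∑ i, w i) S :=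
    (continuous_finset_sum _ fun i _ => continuous_apply i).continuousOn
  obtain ⟨zhat, hzhatS, hmax⟩ := hScompact.exists_isMaxOn hSne hcont
  refine ⟨zhat, hzhatS.1, hzhatS.2, ?_⟩
  apply Set.eq_singleton_iff_unique_mem.2
  refine ⟨⟨hzhatS.1, show zhat ≤ zhat from le_refl _⟩, ?_⟩
  rintro w ⟨hwM, hle⟩
  have hwS : w ∈ S := ⟨hwM, show z ≤ w from le_trans hzhatS.2 hle⟩
  have hsum : ∑ i, w i ≤ ∑ i, zhat i := hmax hwS
  have hsum' : ∑ i, zhat i ≤ ∑ i, w i := Finset.sum_le_sum fun i _ => hle i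
  have heq : ∑ i, w i = ∑ i, zhat i := le_antisymm hsum hsum'
  funext i
  by_contra hne'
  have hlt : zhat i < w i := lt_of_le_of_ne (hle i) (fun h => hne' h.symm)
  have : ∑ j, zhat j < ∑ j, w j :=
    Finset.sum_lt_sum (fun j _ => hle j) ⟨i, Finset.mem_univ i, hlt⟩
  linarith
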